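/- Let G be a finite commutative group with |G| = q, let A ⊆ G be a standard set, let B ⊆ G satisfy (B−B) ∩ A = {0}, and let f : G → ℝ be a function with f(x) ≤ 0 for every x ∈ G∖A and with f̂ ≥ 0. Then |B| · f̂(𝟙) ≤ q · f(0). (Consequently δ(A) ≤ λ⁻(A).) -/
import Mathlib


open scoped Pointwise ComplexOrder

noncomputable section

def IsStandard {G : Type*} [AddCommGroup G] (A : Set G) : Prop :=
  A = -A ∧ (0 : G) ∈ A

def Delta {G : Type*} [AddCommGroup G] (A : Set G) : ℕ :=
  sSup {n | ∃ B : Finset G, ((B : Set G) - (B : Set G)) ∩ A = {0} ∧ B.card = n}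

def DeltaBar {G : Type*} [AddCommGroup G] (A : Set G) : ℕ :=
  sSup {n | ∃ B : Finset G, ((B : Set G) - (B : Set G)) ⊆ A ∧ B.card = n}

def deltaL {G : Type*} [AddCommGroup G] [Fintype G] (A : Set G) : ℝ :=
  (Delta A : ℝ) / (Fintype.card G : ℝ)

def deltaU {G : Type*} [AddCommGroup G] (A : Set G) : ℝ :=
  1 / (DeltaBar A : ℝ)

def ftrans {G : Type*} [AddCommGroup G] [Fintype G] (f : G → ℝ) (γ : AddChar G Circle) : ℂ :=
  ∑ x, (γ x : ℂ) * (f x : ℂ)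

def PosFT {G : Type*} [AddCommGroup G] [Fintype G] (f : G → ℝ) : Prop :=
  ∀ γ : AddChar G Circle, 0 ≤ ftrans f γ

def lamSet {G : Type*} [AddCommGroup G] [Fintype G] (S : Set (G → ℝ)) : Set ℝ :=
  {r | ∃ f ∈ S, PosFT f ∧ (∑ x, f x) ≠ 0 ∧ r = f 0 / ∑ x, f x}

def lam {G : Type*} [AddCommGroup G] [Fintype G] (A : Set G) : ℝ :=
  sInf (lamSet {f | f ≠ 0 ∧ ∀ x ∉ A, f x = 0})

def lamMinus {G : Type*} [AddCommGroup G] [Fintype G] (A : Set G) : ℝ :=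
  sInf (lamSet {f | f ≠ 0 ∧ ∀ x ∉ A, f x ≤ 0})

def lamPlus {G : Type*} [AddCommGroup G] [Fintype G] (A : Set G) : ℝ :=
  sInf (lamSet {f | f ≠ 0 ∧ (∀ x ∉ A, f x = 0) ∧ ∀ x ∈ A, 0 ≤ f x})

def lamPM {G : Type*} [AddCommGroup G] [Fintype G] (A : Set G) : ℝ :=
  sInf (lamSet {f | f ≠ 0 ∧ (∀ x ∉ A, f x ≤ 0) ∧ ∀ x ∈ A, 0 ≤ f x})

theorem stmt1 {G : Type*} [AddCommGroup G] [Fintype G] (A : Set G) (hA : IsStandard A)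
    (B : Finset G) (hB : ((B : Set G) - (B : Set G)) ∩ A = {0})
    (f : G → ℝ) (hf : ∀ x ∉ A, f x ≤ 0) (hft : PosFT f) :
    (B.card : ℝ) * (∑ x, f x) ≤ (Fintype.card G : ℝ) * f 0 := by
  classical
  set q : ℕ := Fintype.card G with hq
  have hpos : ∀ ψ : AddChar G ℂ, 0 ≤ ∑ x, ψ x * (f x : ℂ) := by
    intro ψ
    have h := hft (AddChar.circleEquivComplex.symm ψ)
    have hco : ∀ x : G, ((AddChar.circleEquivComplex.symm ψ) x : ℂ) = ψ x := fun x => rfl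
    simpa [ftrans, hco] using h
  have horth : ∀ y : G, ∑ ψ : AddChar G ℂ, ψ y = if y = 0 then (q : ℂ) else 0 :=
    fun y => AddChar.sum_apply_eq_ite y
  have hinv : ∑ ψ : AddChar G ℂ, ∑ x, ψ x * (f x : ℂ) = (q : ℂ) * (f 0 : ℂ) := by
    rw [Finset.sum_comm]
    simp_rw [← Finset.sum_mul, horth]
    simp
  have hf00 : (0:ℝ) ≤ (q : ℝ) * f 0 := by
    have h1 : (0:ℂ) ≤ ∑ ψ : AddChar G ℂ, ∑ x, ψ x * (f x : ℂ) :=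
      Finset.sum_nonneg fun ψ _ => hpos ψ
    rw [hinv] at h1
    exact_mod_cast h1
  have hoff : ∀ b ∈ B, ∀ b' ∈ B, b ≠ b' → f (b - b') ≤ 0 := by
    intro b hb b' hb' hne
    refine hf _ fun hmem => hne ?_
    have : (b - b' : G) ∈ ((B : Set G) - (B : Set G)) ∩ A :=
      ⟨Set.sub_mem_sub (by exact_mod_cast hb) (by exact_mod_cast hb'), hmem⟩
    rw [hB] at this
    exact sub_eq_zero.mp this
  have hdsum : ∑ b ∈ B, ∑ b' ∈ B, f (b' - b) ≤ (B.card : ℝ) * f 0 := by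
    have hrow : ∀ b ∈ B, ∑ b' ∈ B, f (b' - b) ≤ f 0 := by
      intro b hb
      rw [← Finset.add_sum_erase _ _ hb]
      have h2 : ∑ b' ∈ B.erase b, f (b' - b) ≤ 0 :=
        Finset.sum_nonpos fun b' hb' =>
          hoff b' (Finset.mem_of_mem_erase hb') b hb (Finset.ne_of_mem_erase hb')
      simp only [sub_self]
      linarith
    calc ∑ b ∈ B, ∑ b' ∈ B, f (b' - b) ≤ ∑ _b ∈ B, f 0 := Finset.sum_le_sum hrow
      _ = (B.card : ℝ) * f 0 := by rw [Finset.sum_const, nsmul_eq_mul]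
  have key : ∑ ψ : AddChar G ℂ,
      (∑ x, ψ x * (f x : ℂ)) * ((∑ b ∈ B, ψ b) * (starRingEnd ℂ) (∑ b ∈ B, ψ b))
      = (q : ℂ) * ∑ b ∈ B, ∑ b' ∈ B, (f (b' - b) : ℂ) := by
    have expand : ∀ ψ : AddChar G ℂ,
        (∑ x, ψ x * (f x : ℂ)) * ((∑ b ∈ B, ψ b) * (starRingEnd ℂ) (∑ b ∈ B, ψ b))
        = ∑ b ∈ B, ∑ b' ∈ B, ∑ x, (f x : ℂ) * ψ (x + (b - b')) := by
      intro ψ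
      rw [map_sum]
      simp_rw [← AddChar.map_neg_eq_conj]
      rw [Finset.sum_mul_sum B B, Finset.mul_sum]
      refine Finset.sum_congr rfl fun b _ => ?_
      rw [Finset.mul_sum]
      refine Finset.sum_congr rfl fun b' _ => ?_
      rw [Finset.sum_mul]
      refine Finset.sum_congr rfl fun x _ => ?_
      rw [sub_eq_add_neg, AddChar.map_add_eq_mul, AddChar.map_add_eq_mul]
      ring
    simp_rw [expand]
    rw [Finset.sum_comm, Finset.mul_sum]
    refine Finset.sum_congr rfl fun b _ => ?_
    rw [Finset.sum_comm, Finset.mul_sum]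
    refine Finset.sum_congr rfl fun b' _ => ?_
    rw [Finset.sum_comm]
    simp_rw [← Finset.mul_sum, horth]
    have hiff : ∀ x : G, x + (b - b') = 0 ↔ x = b' - b := by
      intro x; rw [add_eq_zero_iff_eq_neg, neg_sub]
    simp_rw [hiff, mul_ite, mul_zero]
    rw [Finset.sum_ite_eq' Finset.univ (b' - b) (fun x => (f x : ℂ) * (q : ℂ))]
    simp [mul_comm]
  have lower : ((∑ x, f x : ℝ) : ℂ) * (B.card : ℂ) ^ 2 ≤
      ∑ ψ : AddChar G ℂ,
        (∑ x, ψ x * (f x : ℂ)) * ((∑ b ∈ B, ψ b) * (starRingEnd ℂ) (∑ b ∈ B, ψ b)) := by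
    have hterm : ∀ ψ : AddChar G ℂ, 0 ≤
        (∑ x, ψ x * (f x : ℂ)) * ((∑ b ∈ B, ψ b) * (starRingEnd ℂ) (∑ b ∈ B, ψ b)) := by
      intro ψ
      refine mul_nonneg (hpos ψ) ?_
      rw [Complex.mul_conj]
      exact_mod_cast Complex.normSq_nonneg _
    have h1 := Finset.single_le_sum (f := fun ψ : AddChar G ℂ =>
        (∑ x, ψ x * (f x : ℂ)) * ((∑ b ∈ B, ψ b) * (starRingEnd ℂ) (∑ b ∈ B, ψ b)))
      (fun ψ _ => hterm ψ) (Finset.mem_univ (1 : AddChar G ℂ))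
    refine le_trans (le_of_eq ?_) h1
    simp only [AddChar.one_apply, one_mul, Finset.sum_const, nsmul_eq_mul, mul_one, map_natCast]
    push_cast
    ring
  rw [key] at lower
  have main : ((∑ x, f x : ℝ)) * (B.card : ℝ) ^ 2 ≤ (q : ℝ) * ((B.card : ℝ) * f 0) := by
    have h3 : (∑ x, f x) * (B.card : ℝ) ^ 2 ≤ (q : ℝ) * ∑ b ∈ B, ∑ b' ∈ B, f (b' - b) := by
      exact_mod_cast lower
    have h4 : (q : ℝ) * ∑ b ∈ B, ∑ b' ∈ B, f (b' - b) ≤ (q : ℝ) * ((B.card : ℝ) * f 0) :=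
      mul_le_mul_of_nonneg_left hdsum (by positivity)
    linarith
  rcases Nat.eq_zero_or_pos B.card with h0 | h0
  · rw [h0]; simpa using hf00
  · have hc : (0:ℝ) < (B.card : ℝ) := by exact_mod_cast h0
    nlinarith [main, hc]
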